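/- Let q be a power of an odd prime, and let λ ∈ 𝔽_q be such that λ ≠ −(u² + u) for every u ∈ 𝔽_q. Set f(Y₀,Y₁) = Y₀^{q+1} − Y₀ Y₁^q + λ Y₁^{q+1}. Then the symmetric curve C_{f,f}, defined by F = f(Y₀,Y₁)·(X₀^q X₁ − X₀ X₁^q) + f(X₀,X₁)·(Y₀^q Y₁ − Y₀ Y₁^q), is smooth: there is no point ((α₀,α₁),(β₀,β₁)) with (α₀,α₁),(β₀,β₁) ∈ K² \ {(0,0)} (K the algebraic closure of 𝔽_q) at which F and all four partial derivatives F_{X₀}, F_{X₁}, F_{Y₀}, F_{Y₁} vanish simultaneously. -/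
import Mathlib


open MvPolynomial

/-- Let `q` be a power of an odd prime and `λ ∈ 𝔽_q` with `λ ≠ -(u² + u)` for
every `u ∈ 𝔽_q`.  With `f(Y₀,Y₁) = Y₀^{q+1} - Y₀ Y₁^q + λ Y₁^{q+1}`, the
symmetric space filling curve `C_{f,f}`, defined by
`F = f(Y₀,Y₁)·(X₀^q X₁ − X₀ X₁^q) + f(X₀,X₁)·(Y₀^q Y₁ − Y₀ Y₁^q)`, is smooth:
there is no point `((α₀:α₁),(β₀:β₁)) ∈ (ℙ¹×ℙ¹)(K)` (with `K` the algebraic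
closure of `𝔽_q`) at which `F` and all four partial derivatives vanish.
Here the variables of `MvPolynomial (Fin 4) 𝔽_q` are `X₀ = X 0`, `X₁ = X 1`,
`Y₀ = X 2`, `Y₁ = X 3`. -/
theorem symmetric_space_filling_curve_smooth
    {Fq : Type*} [Field Fq] [Fintype Fq] (p n q : ℕ) (hp : p.Prime)
    (hodd : Odd p) (hn : 0 < n) (hq : q = p ^ n) (hcard : Fintype.card Fq = q)
    (lam : Fq) (hlam : ∀ u : Fq, lam ≠ -(u ^ 2 + u))
    (f : MvPolynomial (Fin 2) Fq)
    (hf : f = X 0 ^ (q + 1) - X 0 * X 1 ^ q + C lam * X 1 ^ (q + 1))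
    (Fpoly : MvPolynomial (Fin 4) Fq)
    (hFpoly : Fpoly
      = aeval ![(X 2 : MvPolynomial (Fin 4) Fq), X 3] f
          * (X 0 ^ q * X 1 - X 0 * X 1 ^ q)
        + aeval ![(X 0 : MvPolynomial (Fin 4) Fq), X 1] f
          * (X 2 ^ q * X 3 - X 2 * X 3 ^ q)) :
    ¬ ∃ α₀ α₁ β₀ β₁ : AlgebraicClosure Fq,
      (α₀, α₁) ≠ (0, 0) ∧ (β₀, β₁) ≠ (0, 0) ∧
      aeval ![α₀, α₁, β₀, β₁] Fpoly = 0 ∧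
      ∀ i : Fin 4, aeval ![α₀, α₁, β₀, β₁] (pderiv i Fpoly) = 0 := by
  subst hf; subst hFpoly
  rintro ⟨α₀, α₁, β₀, β₁, hα, hβ, -, hD⟩
  classical
  have hq1 : 1 < q := by rw [hq]; exact Nat.one_lt_pow hn.ne' hp.one_lt
  have hq0 : q ≠ 0 := by omega
  haveI : Fact p.Prime := ⟨hp⟩
  have hqFq : (q : Fq) = 0 := by rw [← hcard]; exact FiniteField.cast_card_eq_zero Fq
  have hrc : ringChar Fq = p := by
    have h2 : ringChar Fq ∣ p ^ n := by rw [← hq]; exact ringChar.dvd hqFq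
    have hrp : (ringChar Fq).Prime := CharP.char_is_prime Fq (ringChar Fq)
    exact (Nat.prime_dvd_prime_iff_eq hrp hp).mp (hrp.dvd_of_dvd_pow h2)
  haveI hcharFq : CharP Fq p := hrc ▸ ringChar.charP Fq
  haveI hcharK : CharP (AlgebraicClosure Fq) p :=
    charP_of_injective_algebraMap (algebraMap Fq (AlgebraicClosure Fq)).injective p
  have hqK : (q : AlgebraicClosure Fq) = 0 := by
    rw [hq]; push_cast; rw [CharP.cast_eq_zero]; exact zero_pow (by omega)
  have h2Fq : (2 : Fq) ≠ 0 := by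
    intro h
    have hd : p ∣ 2 := (CharP.cast_eq_zero_iff Fq p 2).mp (by exact_mod_cast h)
    have hp2 : p = 2 := (Nat.prime_dvd_prime_iff_eq hp Nat.prime_two).mp hd
    rw [hp2] at hodd
    exact (Nat.not_odd_iff_even.mpr (by decide)) hodd
  have hinj := (algebraMap Fq (AlgebraicClosure Fq)).injective
  have h2K : (2 : AlgebraicClosure Fq) ≠ 0 := by
    intro h
    have h' : algebraMap Fq (AlgebraicClosure Fq) 2 = algebraMap Fq (AlgebraicClosure Fq) 0 := by
      rw [map_ofNat, map_zero]; exact h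
    exact h2Fq (hinj h')
  set μ := algebraMap Fq (AlgebraicClosure Fq) lam with hμdef
  have hμq : μ ^ q = μ := by rw [hμdef, ← map_pow, ← hcard, FiniteField.pow_card]
  have hμnegq : (-μ) ^ q = -μ := by
    rw [hμdef, ← map_neg, ← map_pow, ← hcard, FiniteField.pow_card]
  have hμ0 : μ ≠ 0 := by
    intro h
    have : lam = 0 := hinj (by rw [← hμdef, h, map_zero])
    exact hlam 0 (by rw [this]; ring)
  -- membership lemma
  have hmem : ∀ x : AlgebraicClosure Fq, x ^ q = x →
      ∃ u : Fq, algebraMap Fq (AlgebraicClosure Fq) u = x := by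
    intro x hx
    have hmonic : (Polynomial.X ^ q - Polynomial.X : Polynomial Fq).Monic := by
      have h := Polynomial.monic_X_pow_sub (R := Fq) (p := Polynomial.X) (n := q) (by
        rw [Polynomial.degree_X]; exact_mod_cast hq1)
      exact h
    have hroots := FiniteField.roots_X_pow_card_sub_X Fq
    rw [hcard] at hroots
    have hdeg := FiniteField.X_pow_card_sub_X_natDegree_eq Fq hq1
    have hcr : Multiset.card (Polynomial.X ^ q - Polynomial.X : Polynomial Fq).roots
        = (Polynomial.X ^ q - Polynomial.X : Polynomial Fq).natDegree := by
      rw [hroots, hdeg]; exact hcard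
    have hP := Polynomial.prod_multiset_X_sub_C_of_monic_of_roots_card_eq hmonic hcr
    rw [hroots] at hP
    have h0 : Polynomial.aeval x (Polynomial.X ^ q - Polynomial.X : Polynomial Fq) = 0 := by
      simp [hx, sub_eq_zero]
    rw [← hP, map_multiset_prod, Multiset.map_map] at h0
    obtain ⟨u, -, hu⟩ := Multiset.mem_map.mp (Multiset.prod_eq_zero_iff.mp h0)
    refine ⟨u, ?_⟩
    simp only [Function.comp_apply, map_sub, Polynomial.aeval_X, Polynomial.aeval_C] at hu
    exact (sub_eq_zero.mp hu).symm
  have hnoroot : ∀ x : AlgebraicClosure Fq, x ^ q = x → x * x - x + μ ≠ 0 := by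
    intro x hx hroot
    obtain ⟨u, hu⟩ := hmem x hx
    refine hlam (-u) (hinj ?_)
    rw [show ((-((-u) ^ 2 + -u)) : Fq) = u - u * u from by ring]
    rw [map_sub, map_mul, hu, ← hμdef]
    linear_combination hroot
  -- evaluated partial derivatives
  have hE0 : (β₀ ^ (q+1) - β₀ * β₁ ^ q + μ * β₁ ^ (q+1)) * (-(α₁ ^ q))
      + (α₀ ^ q - α₁ ^ q) * (β₀ ^ q * β₁ - β₀ * β₁ ^ q) = 0 := by
    have h := hD 0
    simp only [map_add, map_sub, map_mul, map_pow, map_natCast, map_one, aeval_X, aeval_C,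
      algHom_C, pderiv_mul, Derivation.leibniz_pow, pderiv_X, pderiv_C, algebraMap_eq,
      Pi.single_eq_same,
      Pi.single_eq_of_ne (by decide : (1:Fin 4) ≠ 0), Pi.single_eq_of_ne (by decide : (2:Fin 4) ≠ 0),
      Pi.single_eq_of_ne (by decide : (3:Fin 4) ≠ 0),
      Matrix.cons_val_zero, Matrix.cons_val_one, Matrix.head_cons, Matrix.cons_val_two,
      Matrix.cons_val_three, Matrix.tail_cons, smul_eq_mul, nsmul_eq_mul] at h
    push_cast at h
    rw [hqK] at h
    simp only [map_zero, zero_mul, mul_zero, add_zero, zero_add, sub_zero] at h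
    rw [← hμdef] at h
    linear_combination h
  have hE1 : (β₀ ^ (q+1) - β₀ * β₁ ^ q + μ * β₁ ^ (q+1)) * α₀ ^ q
      + (μ * α₁ ^ q) * (β₀ ^ q * β₁ - β₀ * β₁ ^ q) = 0 := by
    have h := hD 1
    simp only [map_add, map_sub, map_mul, map_pow, map_natCast, map_one, aeval_X, aeval_C,
      algHom_C, pderiv_mul, Derivation.leibniz_pow, pderiv_X, pderiv_C, algebraMap_eq,
      Pi.single_eq_same,
      Pi.single_eq_of_ne (by decide : (0:Fin 4) ≠ 1), Pi.single_eq_of_ne (by decide : (2:Fin 4) ≠ 1),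
      Pi.single_eq_of_ne (by decide : (3:Fin 4) ≠ 1),
      Matrix.cons_val_zero, Matrix.cons_val_one, Matrix.head_cons, Matrix.cons_val_two,
      Matrix.cons_val_three, Matrix.tail_cons, smul_eq_mul, nsmul_eq_mul] at h
    push_cast at h
    rw [hqK] at h
    simp only [map_zero, zero_mul, mul_zero, add_zero, zero_add, sub_zero] at h
    rw [← hμdef] at h
    linear_combination h
  have hE2 : (α₀ ^ (q+1) - α₀ * α₁ ^ q + μ * α₁ ^ (q+1)) * (-(β₁ ^ q))
      + (β₀ ^ q - β₁ ^ q) * (α₀ ^ q * α₁ - α₀ * α₁ ^ q) = 0 := by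
    have h := hD 2
    simp only [map_add, map_sub, map_mul, map_pow, map_natCast, map_one, aeval_X, aeval_C,
      algHom_C, pderiv_mul, Derivation.leibniz_pow, pderiv_X, pderiv_C, algebraMap_eq,
      Pi.single_eq_same,
      Pi.single_eq_of_ne (by decide : (0:Fin 4) ≠ 2), Pi.single_eq_of_ne (by decide : (1:Fin 4) ≠ 2),
      Pi.single_eq_of_ne (by decide : (3:Fin 4) ≠ 2),
      Matrix.cons_val_zero, Matrix.cons_val_one, Matrix.head_cons, Matrix.cons_val_two,
      Matrix.cons_val_three, Matrix.tail_cons, smul_eq_mul, nsmul_eq_mul] at h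
    push_cast at h
    rw [hqK] at h
    simp only [map_zero, zero_mul, mul_zero, add_zero, zero_add, sub_zero] at h
    rw [← hμdef] at h
    linear_combination h
  have hE3 : (α₀ ^ (q+1) - α₀ * α₁ ^ q + μ * α₁ ^ (q+1)) * β₀ ^ q
      + (μ * β₁ ^ q) * (α₀ ^ q * α₁ - α₀ * α₁ ^ q) = 0 := by
    have h := hD 3
    simp only [map_add, map_sub, map_mul, map_pow, map_natCast, map_one, aeval_X, aeval_C,
      algHom_C, pderiv_mul, Derivation.leibniz_pow, pderiv_X, pderiv_C, algebraMap_eq,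
      Pi.single_eq_same,
      Pi.single_eq_of_ne (by decide : (0:Fin 4) ≠ 3), Pi.single_eq_of_ne (by decide : (1:Fin 4) ≠ 3),
      Pi.single_eq_of_ne (by decide : (2:Fin 4) ≠ 3),
      Matrix.cons_val_zero, Matrix.cons_val_one, Matrix.head_cons, Matrix.cons_val_two,
      Matrix.cons_val_three, Matrix.tail_cons, smul_eq_mul, nsmul_eq_mul] at h
    push_cast at h
    rw [hqK] at h
    simp only [map_zero, zero_mul, mul_zero, add_zero, zero_add, sub_zero] at h
    rw [← hμdef] at h
    linear_combination h
  have hz : (0 : AlgebraicClosure Fq) ^ q = 0 := zero_pow hq0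
  have hz1 : (0 : AlgebraicClosure Fq) ^ (q+1) = 0 := zero_pow (by omega)
  -- β₁ ≠ 0
  have hβ₁ : β₁ ≠ 0 := by
    intro h
    subst h
    have hb0 : β₀ ≠ 0 := by simpa using hβ
    have h1 : β₀ ^ (q+1) * α₁ ^ q = 0 := by
      linear_combination (-1) * hE0 + (β₀ * α₁ ^ q - (α₀ ^ q - α₁ ^ q) * β₀) * hz
        + (-(μ * α₁ ^ q)) * hz1
    have h2 : β₀ ^ (q+1) * α₀ ^ q = 0 := by
      linear_combination hE1 + (β₀ * α₀ ^ q + μ * α₁ ^ q * β₀) * hz + (-(μ * α₀ ^ q)) * hz1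
    have hbne : β₀ ^ (q+1) ≠ 0 := pow_ne_zero _ hb0
    have hα₁0 : α₁ = 0 :=
      pow_eq_zero_iff hq0 |>.mp ((mul_eq_zero.mp h1).resolve_left hbne)
    have hα₀0 : α₀ = 0 :=
      pow_eq_zero_iff hq0 |>.mp ((mul_eq_zero.mp h2).resolve_left hbne)
    exact hα (by rw [hα₀0, hα₁0])
  -- α₁ ≠ 0
  have hα₁ : α₁ ≠ 0 := by
    intro h
    subst h
    have ha0 : α₀ ≠ 0 := by simpa using hα
    have h1 : α₀ ^ (q+1) * β₁ ^ q = 0 := by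
      linear_combination (-1) * hE2 + (α₀ * β₁ ^ q - (β₀ ^ q - β₁ ^ q) * α₀) * hz
        + (-(μ * β₁ ^ q)) * hz1
    have hane : α₀ ^ (q+1) ≠ 0 := pow_ne_zero _ ha0
    exact hβ₁ (pow_eq_zero_iff hq0 |>.mp ((mul_eq_zero.mp h1).resolve_left hane))
  -- reduce to affine coordinates
  set a := α₀ / α₁ with hadef
  set b := β₀ / β₁ with hbdef
  have hα₀ : α₀ = a * α₁ := (div_mul_cancel₀ α₀ hα₁).symm
  have hβ₀ : β₀ = b * β₁ := (div_mul_cancel₀ β₀ hβ₁).symm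
  have hneα : α₁ ^ q * β₁ ^ (q+1) ≠ 0 := mul_ne_zero (pow_ne_zero _ hα₁) (pow_ne_zero _ hβ₁)
  have hneβ : β₁ ^ q * α₁ ^ (q+1) ≠ 0 := mul_ne_zero (pow_ne_zero _ hβ₁) (pow_ne_zero _ hα₁)
  rw [hα₀, hβ₀] at hE0 hE1 hE2 hE3
  have rE0 : -(b ^ (q+1) - b + μ) + (a ^ q - 1) * (b ^ q - b) = 0 := by
    have key : α₁ ^ q * β₁ ^ (q+1) * (-(b ^ (q+1) - b + μ) + (a ^ q - 1) * (b ^ q - b)) = 0 := by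
      linear_combination hE0
    exact (mul_eq_zero.mp key).resolve_left hneα
  have rE1 : (b ^ (q+1) - b + μ) * a ^ q + μ * (b ^ q - b) = 0 := by
    have key : α₁ ^ q * β₁ ^ (q+1) * ((b ^ (q+1) - b + μ) * a ^ q + μ * (b ^ q - b)) = 0 := by
      linear_combination hE1
    exact (mul_eq_zero.mp key).resolve_left hneα
  have rE2 : -(a ^ (q+1) - a + μ) + (b ^ q - 1) * (a ^ q - a) = 0 := by
    have key : β₁ ^ q * α₁ ^ (q+1) * (-(a ^ (q+1) - a + μ) + (b ^ q - 1) * (a ^ q - a)) = 0 := by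
      linear_combination hE2
    exact (mul_eq_zero.mp key).resolve_left hneβ
  have rE3 : (a ^ (q+1) - a + μ) * b ^ q + μ * (a ^ q - a) = 0 := by
    have key : β₁ ^ q * α₁ ^ (q+1) * ((a ^ (q+1) - a + μ) * b ^ q + μ * (a ^ q - a)) = 0 := by
      linear_combination hE3
    exact (mul_eq_zero.mp key).resolve_left hneβ
  -- nondegeneracy
  have hdb : b ^ q - b ≠ 0 := by
    intro h
    have hb : b ^ q = b := sub_eq_zero.mp h
    exact hnoroot b hb (by linear_combination (-1) * rE0 + (a ^ q - 1 - b) * h)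
  have hda : a ^ q - a ≠ 0 := by
    intro h
    have ha : a ^ q = a := sub_eq_zero.mp h
    exact hnoroot a ha (by linear_combination (-1) * rE2 + (b ^ q - 1 - a) * h)
  -- both a^q and b^q are roots of z^2 - z + μ
  have hs : a ^ q * a ^ q - a ^ q + μ = 0 := by
    have key : (b ^ q - b) * (a ^ q * a ^ q - a ^ q + μ) = 0 := by
      linear_combination (a ^ q) * rE0 + rE1
    exact (mul_eq_zero.mp key).resolve_left hdb
  have ht : b ^ q * b ^ q - b ^ q + μ = 0 := by
    have key : (a ^ q - a) * (b ^ q * b ^ q - b ^ q + μ) = 0 := by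
      linear_combination (b ^ q) * rE2 + rE3
    exact (mul_eq_zero.mp key).resolve_left hda
  -- Frobenius of s
  have hsq : (a ^ q) ^ q = 1 - a ^ q := by
    have h1 : (a ^ q * a ^ q - a ^ q + μ) ^ q = 0 := by rw [hs]; exact zero_pow hq0
    have h2 : (a ^ q * a ^ q - a ^ q + μ) ^ q
        = (a ^ q) ^ q * (a ^ q) ^ q - (a ^ q) ^ q + μ ^ q := by
      rw [hq, add_pow_char_pow, sub_pow_char_pow, mul_pow]
    rw [h2, hμq] at h1
    have key : ((a ^ q) ^ q - a ^ q) * ((a ^ q) ^ q + a ^ q - 1) = 0 := by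
      linear_combination h1 - hs
    rcases mul_eq_zero.mp key with h | h
    · exact absurd hs (hnoroot (a ^ q) (sub_eq_zero.mp h))
    · linear_combination h
  -- t = s or t = 1 - s
  have htcase : b ^ q = a ^ q ∨ b ^ q = 1 - a ^ q := by
    have key : (b ^ q - a ^ q) * (b ^ q + a ^ q - 1) = 0 := by
      linear_combination ht - hs
    rcases mul_eq_zero.mp key with h | h
    · exact Or.inl (sub_eq_zero.mp h)
    · exact Or.inr (by linear_combination h)
  rcases htcase with hts | hts
  · -- case t = s
    rw [hts] at rE2
    have hkey : (2 : AlgebraicClosure Fq) * ((a ^ q - 1) * a + μ) = 0 := by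
      linear_combination (-1) * rE2 + hs
    have h5 : (a ^ q - 1) * a = -μ := by
      have := (mul_eq_zero.mp hkey).resolve_left h2K
      linear_combination this
    have h7 : (a ^ q - 1) ^ q = (a ^ q) ^ q - 1 := by
      rw [hq, sub_pow_char_pow, one_pow]
    have h9 : ((a ^ q) ^ q - 1) * a ^ q = -μ := by
      rw [← h7, ← mul_pow, h5]; exact hμnegq
    rw [hsq] at h9
    have hs2 : a ^ q * a ^ q = μ := by linear_combination (-1) * h9
    have hs3 : a ^ q = 2 * μ := by linear_combination hs2 - hs
    have h4μ : μ * ((4 : AlgebraicClosure Fq) * μ - 1) = 0 := by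
      linear_combination hs2 - (a ^ q + 2 * μ) * hs3
    have h4 : (4 : AlgebraicClosure Fq) * μ - 1 = 0 := (mul_eq_zero.mp h4μ).resolve_left hμ0
    have h4' : (4 : Fq) * lam - 1 = 0 := by
      apply hinj
      rw [map_sub, map_mul, map_ofNat, map_one, map_zero, ← hμdef]
      exact h4
    have h2inv : (2 : Fq) * 2⁻¹ = 1 := mul_inv_cancel₀ h2Fq
    refine hlam (-(2⁻¹ : Fq)) ?_
    linear_combination (2⁻¹ * 2⁻¹ : Fq) * h4' + ((2⁻¹ : Fq) - lam * (1 + 2 * 2⁻¹)) * h2inv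
  · -- case t = 1 - s
    rw [hts] at rE2
    have ha : a = a ^ q := by linear_combination rE2 + hs
    have haq : (a ^ q) ^ q = a ^ q := by
      conv_lhs => rw [← ha]
    exact absurd hs (hnoroot (a ^ q) haq)
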